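/- Let n ≥ 2 and let a₁, …, aₙ be real numbers with a₁ = 1 and 0 ≤ aᵢ < 1 for 2 ≤ i ≤ n. Define the n×n real matrix T by Tᵢᵢ = aᵢ and Tᵢⱼ = (1 − aᵢ)/(n − 1) for i ≠ j, and let p(x) = ∏_{i=1}^n (x − (1 − aᵢ)). Then the multiset of eigenvalues of T is exactly {1 − (n/(n−1))·μ : μ a root of x·p′(x), counted with multiplicity}; in particular, if the numbers 1 − a₂, …, 1 − aₙ are distinct, then the second largest eigenvalue λ* of T (all eigenvalues of T being real) satisfies λ* = 1 − (n/(n−1))·μ*, where μ* is the smallest root of p′(x). -/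

import Mathlib

open Polynomial Matrix


/-- Determinant of a diagonal matrix plus a rank one matrix with constant rows,
over a field, when the diagonal entries are nonzero. -/
theorem det_diag_add_rankone {F : Type*} [Field F] {m : Type*} [Fintype m] [DecidableEq m]
    (u v : m → F) (hu : ∀ i, u i ≠ 0) :
    (Matrix.diagonal u + Matrix.replicateCol Unit v * Matrix.replicateRow Unit (fun _ => (1:F))).det
      = (∏ i, u i) + ∑ i, v i * ∏ j ∈ Finset.univ.erase i, u j := by
  have key : Matrix.diagonal u + Matrix.replicateCol Unit v * Matrix.replicateRow Unit (fun _ => (1:F))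
      = Matrix.diagonal u *
        (1 + Matrix.replicateCol Unit (fun i => (u i)⁻¹ * v i) * Matrix.replicateRow Unit (fun _ => (1:F))) := by
    rw [Matrix.mul_add, Matrix.mul_one, ← Matrix.mul_assoc]
    congr 2
    ext i j
    rw [Matrix.diagonal_mul, Matrix.replicateCol_apply, Matrix.replicateCol_apply, ← mul_assoc,
      mul_inv_cancel₀ (hu i), one_mul]
  rw [key, Matrix.det_mul, Matrix.det_diagonal, Matrix.det_one_add_replicateCol_mul_replicateRow]
  rw [dotProduct, mul_add, mul_one, Finset.mul_sum]
  congr 1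
  refine Finset.sum_congr rfl fun i _ => ?_
  rw [← Finset.mul_prod_erase Finset.univ u (Finset.mem_univ i), one_mul]
  calc (u i * ∏ x ∈ Finset.univ.erase i, u x) * ((u i)⁻¹ * v i)
      = (u i * (u i)⁻¹) * ((∏ x ∈ Finset.univ.erase i, u x) * v i) := by ring
    _ = v i * ∏ x ∈ Finset.univ.erase i, u x := by rw [mul_inv_cancel₀ (hu i), one_mul]; ring

theorem comp_linear_ne_zero {F : Type*} [Field F] (q : F[X]) (a b : F) (ha : a ≠ 0)
    (hq : q ≠ 0) : q.comp (C a * X + C b) ≠ 0 := by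
  intro h
  rw [comp_eq_zero_iff] at h
  rcases h with h | ⟨-, h⟩
  · exact hq h
  · apply_fun natDegree at h
    rw [natDegree_linear ha, natDegree_C] at h
    exact one_ne_zero h

theorem rootMultiplicity_comp_linear {F : Type*} [Field F] (q : F[X]) (a b x : F)
    (ha : a ≠ 0) (hq : q ≠ 0) :
    rootMultiplicity x (q.comp (C a * X + C b)) = rootMultiplicity (a * x + b) q := by
  have hcomp : q.comp (C a * X + C b) ≠ 0 := comp_linear_ne_zero q a b ha hq
  have hdvd_comp : ∀ (r t w : F[X]), r ∣ t → r.comp w ∣ t.comp w := by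
    rintro r t w ⟨c, rfl⟩
    exact ⟨c.comp w, by rw [mul_comp]⟩
  apply le_antisymm
  · rw [le_rootMultiplicity_iff hq]
    have h1 : (X - C x) ^ rootMultiplicity x (q.comp (C a * X + C b)) ∣
        q.comp (C a * X + C b) := pow_rootMultiplicity_dvd _ _
    have h2 := hdvd_comp _ _ (C a⁻¹ * X + C (-(b/a))) h1
    have huw : (C a * X + C b).comp (C a⁻¹ * X + C (-(b/a))) = X := by
      simp only [add_comp, mul_comp, C_comp, X_comp]
      rw [mul_add, ← mul_assoc, ← C_mul, mul_inv_cancel₀ ha, C_1, one_mul, add_assoc,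
        ← C_mul, ← C_add]
      have h0 : a * -(b / a) + b = 0 := by field_simp; ring
      rw [h0, C_0, add_zero]
    have hxw : (X - C x).comp (C a⁻¹ * X + C (-(b/a))) = C a⁻¹ * (X - C (a * x + b)) := by
      rw [sub_comp, X_comp, C_comp, mul_sub, ← C_mul]
      have h0 : a⁻¹ * (a * x + b) = x + b/a := by field_simp
      rw [h0, C_add, C_neg]
      ring
    rw [comp_assoc, huw, comp_X, pow_comp, hxw, mul_pow, ← C_pow] at h2
    exact dvd_trans (dvd_mul_left _ _) h2
  · rw [le_rootMultiplicity_iff hcomp]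
    have h1 : (X - C (a*x+b)) ^ rootMultiplicity (a*x+b) q ∣ q := pow_rootMultiplicity_dvd _ _
    have h2 := hdvd_comp _ _ (C a * X + C b) h1
    have hx : (X - C (a*x+b)).comp (C a * X + C b) = C a * (X - C x) := by
      rw [sub_comp, X_comp, C_comp, mul_sub, ← C_mul, C_add]
      ring
    rw [pow_comp, hx, mul_pow, ← C_pow] at h2
    exact dvd_trans (dvd_mul_left _ _) h2

theorem roots_comp_linear {F : Type*} [Field F] [DecidableEq F] (q : F[X]) (a b : F)
    (ha : a ≠ 0) :
    (q.comp (C a * X + C b)).roots = q.roots.map (fun r => (r - b) / a) := by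
  by_cases hq : q = 0
  · simp [hq]
  refine Multiset.ext.mpr fun x => ?_
  have hinj : Function.Injective (fun r : F => (r - b) / a) := by
    intro r t h
    have := congrArg (fun z => z * a + b) h
    simpa [div_mul_cancel₀, ha] using this
  have hx : (fun r : F => (r - b) / a) (a * x + b) = x := by
    field_simp
    ring
  rw [count_roots, rootMultiplicity_comp_linear q a b x ha hq]
  conv_lhs => rw [← count_roots]
  conv_rhs => rw [← hx]
  rw [Multiset.count_map_eq_count' _ _ hinj]

theorem derivative_finset_prod {ι : Type*} [DecidableEq ι] (s : Finset ι) (f : ι → Polynomial ℝ) :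
    derivative (∏ i ∈ s, f i) = ∑ i ∈ s, (∏ j ∈ s.erase i, f j) * derivative (f i) := by
  induction s using Finset.induction_on with
  | empty => simp
  | @insert a s ha ih =>
    have hsum : ∑ i ∈ s, (∏ j ∈ (insert a s).erase i, f j) * derivative (f i)
        = ∑ i ∈ s, f a * ((∏ j ∈ s.erase i, f j) * derivative (f i)) := by
      refine Finset.sum_congr rfl fun i hi => ?_
      have hia : i ≠ a := fun h => ha (h ▸ hi)
      rw [Finset.erase_insert_of_ne hia.symm,
        Finset.prod_insert (fun h => ha (Finset.mem_of_mem_erase h))]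
      ring
    rw [Finset.prod_insert ha, derivative_mul, ih, Finset.sum_insert ha,
      Finset.erase_insert ha, hsum, ← Finset.mul_sum]
    ring

section Main

theorem eigenvalues_of_learning_matrix' (n : ℕ) (hn : 2 ≤ n) (a : Fin n → ℝ)
    (T : Matrix (Fin n) (Fin n) ℝ)
    (hT : ∀ i j : Fin n, T i j = if i = j then a i else (1 - a i) / (n - 1))
    (p : Polynomial ℝ)
    (hp : p = ∏ i : Fin n, (X - C (1 - a i))) :
    T.charpoly.roots = (X * derivative p).roots.map (fun μ => 1 - ((n : ℝ) / (n - 1)) * μ) := by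
  classical
  have h2 : (2:ℝ) ≤ (n:ℝ) := by exact_mod_cast hn
  have hne : (n:ℝ) - 1 ≠ 0 := by linarith
  have hnn : (n:ℝ) ≠ 0 := by linarith
  set s : ℝ := (n:ℝ) / ((n:ℝ) - 1) with hs_def
  have hs_pos : 0 < s := by rw [hs_def]; apply div_pos <;> linarith
  have hs_ne : s ≠ 0 := ne_of_gt hs_pos
  set e : ℝ := ((n:ℝ) - 1) / (n:ℝ) with he_def
  have he : e ≠ 0 := by rw [he_def]; exact div_ne_zero hne hnn
  have hes : e * s = 1 := by rw [he_def, hs_def]; field_simp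
  set d : Fin n → ℝ := fun i => 1 - s * (1 - a i) with hd_def
  set b : Fin n → ℝ := fun i => (1 - a i) / ((n:ℝ) - 1) with hb_def
  have hab : ∀ i, a i = d i + b i := by
    intro i
    rw [hd_def, hb_def, hs_def]
    field_simp
    ring
  set P : Polynomial ℝ := ∏ i : Fin n, (X - C (d i)) with hP_def
  -- Step 1 : the determinant computation
  have hdet : T.charpoly = P
      + ∑ i : Fin n, (-C (b i)) * ∏ j ∈ Finset.univ.erase i, (X - C (d j)) := by
    apply IsFractionRing.injective (Polynomial ℝ) (RatFunc ℝ)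
    set φ : Polynomial ℝ →+* RatFunc ℝ := (algebraMap (Polynomial ℝ) (RatFunc ℝ) : _) with hφ
    show φ _ = φ _
    unfold Matrix.charpoly
    rw [RingHom.map_det, RingHom.mapMatrix_apply]
    have hmat : (charmatrix T).map φ
        = Matrix.diagonal (fun i => φ (X - C (d i)))
          + Matrix.replicateCol Unit (fun i => φ (-C (b i)))
            * Matrix.replicateRow Unit (fun _ => (1 : RatFunc ℝ)) := by
      ext i j
      have hcr : (Matrix.replicateCol Unit (fun i => φ (-C (b i)))
          * Matrix.replicateRow Unit (fun _ => (1 : RatFunc ℝ))) i j = φ (-C (b i)) := by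
        simp [Matrix.mul_apply]
      rw [Matrix.map_apply, Matrix.add_apply, hcr]
      by_cases hij : i = j
      · subst hij
        rw [Matrix.diagonal_apply_eq, charmatrix_apply_eq, hT i i, if_pos rfl, ← map_add]
        congr 1
        rw [hab i, C_add]
        ring
      · rw [Matrix.diagonal_apply_ne _ hij, charmatrix_apply_ne _ _ _ hij, hT i j, if_neg hij,
          zero_add]
    have hU : ∀ i : Fin n, φ (X - C (d i)) ≠ 0 := fun i =>
      (map_ne_zero_iff φ (IsFractionRing.injective _ _)).mpr (X_sub_C_ne_zero _)
    rw [hmat, det_diag_add_rankone _ _ hU]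
    rw [hP_def]
    simp only [map_add, map_sum, _root_.map_mul, map_prod]
  -- Step 2 : the polynomial identity
  have hQ : ∀ i : Fin n, (X - C (d i)) * ∏ j ∈ Finset.univ.erase i, (X - C (d j)) = P :=
    fun i => by rw [hP_def]; exact Finset.mul_prod_erase Finset.univ (fun j => X - C (d j)) (Finset.mem_univ i)
  have hderiv : derivative P = ∑ i : Fin n, ∏ j ∈ Finset.univ.erase i, (X - C (d j)) := by
    rw [hP_def, derivative_finset_prod]
    refine Finset.sum_congr rfl fun i _ => ?_
    rw [derivative_sub, derivative_X, derivative_C, sub_zero, mul_one]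
  have hB : P + ∑ i : Fin n, (-C (b i)) * ∏ j ∈ Finset.univ.erase i, (X - C (d j))
      = C ((n:ℝ)⁻¹) * ((X - C 1) * derivative P) := by
    rw [hderiv, Finset.mul_sum, Finset.mul_sum]
    have hpoint : ∀ i ∈ Finset.univ,
        C ((n:ℝ)⁻¹) * ((X - C 1) * ∏ j ∈ Finset.univ.erase i, (X - C (d j)))
        = C ((n:ℝ)⁻¹) * P + (-C (b i)) * ∏ j ∈ Finset.univ.erase i, (X - C (d j)) := by
      intro i _
      have hsplit : (X - C (1:ℝ)) = (X - C (d i)) + C (d i - 1) := by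
        rw [C_sub (a := d i) (b := 1), C_1, sub_add_sub_cancel]
      have hcoef : (n:ℝ)⁻¹ * (d i - 1) = -(b i) := by
        rw [hd_def, hb_def, hs_def]
        field_simp
        ring
      rw [hsplit, add_mul, mul_add, hQ i]
      congr 1
      rw [← mul_assoc, ← C_mul, hcoef, C_neg]
    rw [Finset.sum_congr rfl hpoint, Finset.sum_add_distrib]
    congr 1
    rw [Finset.sum_const, Finset.card_univ, Fintype.card_fin, nsmul_eq_mul,
      ← C_eq_natCast, ← mul_assoc, ← C_mul, mul_inv_cancel₀ hnn, C_1, one_mul]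
  -- Step 3 : composition identity
  have hcomp_p : p.comp (C (-e) * X + C e) = C ((-e)^n) * P := by
    rw [hp, prod_comp]
    have hfac : ∀ i ∈ Finset.univ,
        (X - C (1 - a i)).comp (C (-e) * X + C e) = C (-e) * (X - C (d i)) := by
      intro i _
      have hthis : e - (1 - a i) = e * d i := by
        rw [hd_def]
        linear_combination (1 - a i) * hes
      rw [sub_comp, X_comp, C_comp, mul_sub, ← C_mul, add_sub_assoc, ← C_sub, hthis,
        show -e * d i = -(e * d i) by ring, C_neg (a := e * d i), sub_neg_eq_add]
    rw [Finset.prod_congr rfl hfac, Finset.prod_mul_distrib, Finset.prod_const,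
      Finset.card_univ, Fintype.card_fin, C_pow, hP_def]
  have h1 : derivative (p.comp (C (-e) * X + C e))
      = C (-e) * (derivative p).comp (C (-e) * X + C e) := by
    rw [derivative_comp]
    congr 1
    rw [derivative_add, derivative_C, derivative_C_mul_X, add_zero]
  have h2' : derivative (p.comp (C (-e) * X + C e)) = C ((-e)^n) * derivative P := by
    rw [hcomp_p, derivative_C_mul]
  have hstar : C (-e) * (derivative p).comp (C (-e) * X + C e) = C ((-e)^n) * derivative P :=
    h1.symm.trans h2'
  have hC : (X * derivative p).comp (C (-e) * X + C e)
      = C ((-e)^n) * ((X - C 1) * derivative P) := by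
    rw [mul_comp, X_comp]
    calc (C (-e) * X + C e) * (derivative p).comp (C (-e) * X + C e)
        = (X - C 1) * (C (-e) * (derivative p).comp (C (-e) * X + C e)) := by
          rw [show (C (-e) * X + C e : Polynomial ℝ) = (X - C 1) * C (-e) from by
            rw [C_neg, C_1]; ring]
          ring
      _ = (X - C 1) * (C ((-e)^n) * derivative P) := by rw [hstar]
      _ = C ((-e)^n) * ((X - C 1) * derivative P) := by ring
  -- Step 4 : conclude
  have hKne : ((-e)^n : ℝ) ≠ 0 := pow_ne_zero _ (neg_ne_zero.mpr he)
  have hchar2 : T.charpoly = C ((n:ℝ)⁻¹ * ((-e)^n)⁻¹)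
      * ((X * derivative p).comp (C (-e) * X + C e)) := by
    rw [hdet, hB, hC, ← mul_assoc (C ((n:ℝ)⁻¹ * ((-e)^n)⁻¹)), ← C_mul,
      show (n:ℝ)⁻¹ * ((-e)^n)⁻¹ * (-e)^n = (n:ℝ)⁻¹ from by field_simp]
  have hKinv_ne : (n:ℝ)⁻¹ * ((-e)^n)⁻¹ ≠ 0 := mul_ne_zero (inv_ne_zero hnn) (inv_ne_zero hKne)
  rw [hchar2, roots_C_mul _ hKinv_ne, roots_comp_linear _ _ _ (neg_ne_zero.mpr he)]
  have hfun : (fun r : ℝ => (r - e) / (-e)) = (fun μ : ℝ => 1 - s * μ) := by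
    funext r
    rw [div_eq_iff (neg_ne_zero.mpr he)]
    linear_combination (-r) * hes
  rw [hfun]

end Main

/-- **Eigenvalues of the memoryless-learner transition matrix.**
The multiset of eigenvalues of `T` (roots of its characteristic polynomial, with
multiplicity) is the image of the multiset of roots of `x * p'(x)` under
`μ ↦ 1 - (n/(n-1)) μ`; and if the numbers `1 - a i` (`i ≠ 0`) are distinct, the
second largest eigenvalue `λ*` of `T` satisfies `λ* = 1 - (n/(n-1)) μ*`, where
`μ*` is the smallest root of `p'`. -/
theorem eigenvalues_of_learning_matrix (n : ℕ) (hn : 2 ≤ n) (a : Fin n → ℝ)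
    (ha1 : a ⟨0, by omega⟩ = 1)
    (ha : ∀ i : Fin n, i ≠ ⟨0, by omega⟩ → 0 ≤ a i ∧ a i < 1)
    (T : Matrix (Fin n) (Fin n) ℝ)
    (hT : ∀ i j : Fin n, T i j = if i = j then a i else (1 - a i) / (n - 1))
    (p : Polynomial ℝ)
    (hp : p = ∏ i : Fin n, (X - C (1 - a i))) :
    T.charpoly.roots = (X * derivative p).roots.map (fun μ => 1 - ((n : ℝ) / (n - 1)) * μ)
    ∧
    (Function.Injective (fun i : Fin n => (1 - a i)) →
      ∀ μstar : ℝ, (μstar ∈ (derivative p).roots ∧ ∀ μ ∈ (derivative p).roots, μstar ≤ μ) →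
      ∀ lamstar : ℝ,
        (lamstar ∈ T.charpoly.roots.erase 1 ∧ ∀ lam ∈ T.charpoly.roots.erase 1, lam ≤ lamstar) →
        lamstar = 1 - ((n : ℝ) / (n - 1)) * μstar) := by
  classical
  have part1 := eigenvalues_of_learning_matrix' n hn a T hT p hp
  have h2 : (2:ℝ) ≤ (n:ℝ) := by exact_mod_cast hn
  have hne : (n:ℝ) - 1 ≠ 0 := by linarith
  have hnn : (n:ℝ) ≠ 0 := by linarith
  set s : ℝ := (n:ℝ) / ((n:ℝ) - 1) with hs_def
  have hs_pos : 0 < s := by rw [hs_def]; apply div_pos <;> linarith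
  refine ⟨part1, ?_⟩
  -- the second largest eigenvalue
  have hpn : p.natDegree = n := by
    rw [hp, natDegree_prod _ _ (fun i _ => X_sub_C_ne_zero (1 - a i))]
    simp only [natDegree_X_sub_C]
    simp
  have hpm : p.Monic := by
    rw [hp]; exact monic_prod_of_monic _ _ fun i _ => monic_X_sub_C _
  have hcoeff : (derivative p).coeff (n - 1) = (n : ℝ) := by
    rw [coeff_derivative]
    have hn1 : n - 1 + 1 = n := by omega
    rw [hn1, ← hpn, hpm.coeff_natDegree, one_mul, hpn]
    rw [Nat.cast_sub (by omega : 1 ≤ n)]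
    push_cast
    ring
  have hp'ne : derivative p ≠ 0 := by
    intro h
    rw [h, coeff_zero] at hcoeff
    exact hnn hcoeff.symm
  have hqne : X * derivative p ≠ 0 := mul_ne_zero X_ne_zero hp'ne
  have hq_roots : (X * derivative p).roots = 0 ::ₘ (derivative p).roots := by
    rw [roots_mul hqne, roots_X, Multiset.singleton_add]
  rintro - μstar ⟨hμmem, hμmin⟩ lamstar ⟨hlmem, hlmax⟩
  have herase : T.charpoly.roots.erase 1 = (derivative p).roots.map (fun μ => 1 - s * μ) := by
    rw [part1, hq_roots, Multiset.map_cons, show (1 - s * 0 : ℝ) = 1 by ring,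
      Multiset.erase_cons_head]
  rw [herase] at hlmem hlmax
  obtain ⟨μ₀, hμ₀, hfμ₀⟩ := Multiset.mem_map.mp hlmem
  have hle1 : 1 - s * μstar ≤ lamstar := hlmax _ (Multiset.mem_map_of_mem _ hμmem)
  have hle2 : μstar ≤ μ₀ := hμmin _ hμ₀
  have hle3 : s * μstar ≤ s * μ₀ := mul_le_mul_of_nonneg_left hle2 (le_of_lt hs_pos)
  linarith [hfμ₀]
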